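/- arXiv:1407.3515 — 4 statements merged into one kernel-verified Lean document; each statement's English description precedes it below -/
import Mathlib

section
/- Let p be a prime number and let u be a formal power series over ℚ_p with zero constant term. Then exp(u(z)) has all of its coefficients in ℤ_p (i.e., exp(u(z)) ∈ 1 + z·ℤ_p[[z]]) if and only if exp(u(z^p) − p·u(z)) ∈ 1 + p·ℤ_p[[z]], i.e., the latter series has constant term 1 and all of its higher coefficients lie in p·ℤ_p. -/
open PowerSeries Finset

noncomputable section

/-- Formal exponential `exp(u) = ∑ uᵏ/k!` of a power series `u`
(intended for `u` with zero constant term, where the coefficientwise sum is finite). -/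
def psExp {K : Type*} [Field K] (u : PowerSeries K) : PowerSeries K :=
  PowerSeries.mk fun n =>
    ∑ k ∈ Finset.range (n + 1), (PowerSeries.coeff n (u ^ k)) / (Nat.factorial k : K)

/-- Formal logarithm `log(1 + v) = ∑_{k≥1} (-1)^{k+1} vᵏ/k` of a power series `v`
with zero constant term. -/
def psLog {K : Type*} [Field K] (v : PowerSeries K) : PowerSeries K :=
  PowerSeries.mk fun n =>
    ∑ k ∈ Finset.Icc 1 n, ((-1 : K) ^ (k + 1)) * (PowerSeries.coeff n (v ^ k)) / (k : K)

/-- Substitution `z ↦ z^p` in a formal power series: `(psSubstPow p f)(z) = f(z^p)`. -/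
def psSubstPow {K : Type*} [Field K] (p : ℕ) (f : PowerSeries K) : PowerSeries K :=
  PowerSeries.mk fun n => if p ∣ n then PowerSeries.coeff (n / p) f else 0

/-- Gauss hypergeometric series `F(a,b|z) = ∑_n (a)_n (b)_n / (n!)² · zⁿ`. -/
def hgF (a b : ℚ) : PowerSeries ℚ :=
  PowerSeries.mk fun n =>
    (ascPochhammer ℚ n).eval a * (ascPochhammer ℚ n).eval b / (Nat.factorial n : ℚ) ^ 2

/-- `G(a,b|z) = ∑_n (a)_n (b)_n / (n!)² · (∑_{i<n} (1/(a+i) + 1/(b+i) - 2/(1+i))) · zⁿ`. -/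
def hgG (a b : ℚ) : PowerSeries ℚ :=
  PowerSeries.mk fun n =>
    (ascPochhammer ℚ n).eval a * (ascPochhammer ℚ n).eval b / (Nat.factorial n : ℚ) ^ 2 *
      ∑ i ∈ Finset.range n, (1 / (a + (i : ℚ)) + 1 / (b + (i : ℚ)) - 2 / (1 + (i : ℚ)))

/-- The Schwarz map `D(a,b|z) = G(a,b|z)/F(a,b|z)`. -/
def hgD (a b : ℚ) : PowerSeries ℚ := hgG a b * (hgF a b)⁻¹

/-- `q(a,b|z) = z · exp(D(a,b|z))`. -/
def hgq (a b : ℚ) : PowerSeries ℚ := PowerSeries.X * psExp (hgD a b)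

/-- The Dwork map `δ_p(x)`: the unique rational `y` with denominator coprime to `p`
such that `p·y - x` is an integer in `{0, …, p-1}`; explicitly `y = (x + k)/p` where
`k ∈ {0, …, p-1}` satisfies `k ≡ -x (mod p)`. -/
def dwork (p : ℕ) (x : ℚ) : ℚ :=
  (x + (((-(x.num : ZMod p)) * ((x.den : ZMod p))⁻¹).val : ℚ)) / p

/-- `f` is `p`-integral: every coefficient is a rational number with denominator
coprime to `p`, i.e. lies in `ℤ_(p)`. -/
def pIntegral (p : ℕ) (f : PowerSeries ℚ) : Prop :=
  ∀ n, ¬ (p ∣ (PowerSeries.coeff n f).den)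

section Aux

/-- Substitution `z ↦ z^p` for power series over commutative semirings. -/
def psSub {R : Type*} [CommSemiring R] (p : ℕ) (f : PowerSeries R) : PowerSeries R :=
  PowerSeries.mk fun n => if p ∣ n then PowerSeries.coeff (n / p) f else 0

variable {R : Type*} [CommRing R]

lemma coeff_psSub (p : ℕ) (f : PowerSeries R) (n : ℕ) :
    PowerSeries.coeff n (psSub p f) = if p ∣ n then PowerSeries.coeff (n / p) f else 0 :=
  coeff_mk _ _

lemma constantCoeff_psSub (p : ℕ) (f : PowerSeries R) :
    PowerSeries.constantCoeff (psSub p f) = PowerSeries.constantCoeff f := by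
  rw [← coeff_zero_eq_constantCoeff_apply, coeff_psSub, if_pos (dvd_zero p), Nat.zero_div,
    coeff_zero_eq_constantCoeff_apply]

lemma psSub_one {p : ℕ} (hp : 0 < p) : psSub p (1 : PowerSeries R) = 1 := by
  ext n
  rw [coeff_psSub]
  rcases Nat.eq_zero_or_pos n with rfl | hn
  · simp
  · split_ifs with h
    · rw [coeff_one, coeff_one, if_neg (Nat.div_pos (Nat.le_of_dvd hn h) hp).ne',
        if_neg hn.ne']
    · rw [coeff_one, if_neg hn.ne']

lemma psSub_mul {p : ℕ} (hp : 0 < p) (f g : PowerSeries R) :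
    psSub p (f * g) = psSub p f * psSub p g := by
  ext n
  rw [PowerSeries.coeff_mul, coeff_psSub]
  by_cases h : p ∣ n
  · obtain ⟨m, rfl⟩ := h
    rw [if_pos ⟨m, rfl⟩, Nat.mul_div_cancel_left m hp, PowerSeries.coeff_mul]
    rw [show ∑ x ∈ antidiagonal (p * m),
        PowerSeries.coeff x.1 (psSub p f) * PowerSeries.coeff x.2 (psSub p g)
        = ∑ x ∈ (antidiagonal (p * m)).filter (fun x => p ∣ x.1),
        PowerSeries.coeff x.1 (psSub p f) * PowerSeries.coeff x.2 (psSub p g) from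
      (Finset.sum_filter_of_ne (fun x _ hne => by
        by_contra h1
        exact hne (by rw [coeff_psSub, if_neg h1, zero_mul]))).symm]
    refine Finset.sum_nbij' (fun x => (p * x.1, p * x.2)) (fun y => (y.1 / p, y.2 / p))
      ?_ ?_ ?_ ?_ ?_
    · intro a ha
      simp only [HasAntidiagonal.mem_antidiagonal] at ha
      simp only [mem_filter, HasAntidiagonal.mem_antidiagonal]
      exact ⟨by rw [← Nat.left_distrib, ha], dvd_mul_right p a.1⟩
    · intro b hb
      simp only [mem_filter, HasAntidiagonal.mem_antidiagonal] at hb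
      obtain ⟨hsum, ⟨a, ha⟩⟩ := hb
      have hb2 : p ∣ b.2 := (Nat.dvd_add_right ⟨a, ha⟩).1 (hsum ▸ ⟨m, rfl⟩)
      obtain ⟨c, hc⟩ := hb2
      simp only [HasAntidiagonal.mem_antidiagonal, ha, hc, Nat.mul_div_cancel_left _ hp]
      have : p * m = p * (a + c) := by rw [← hsum, ha, hc, Nat.mul_add]
      exact (Nat.eq_of_mul_eq_mul_left hp this).symm
    · intro a _
      simp [Nat.mul_div_cancel_left _ hp]
    · intro b hb
      simp only [mem_filter, HasAntidiagonal.mem_antidiagonal] at hb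
      obtain ⟨hsum, ⟨a, ha⟩⟩ := hb
      have hb2 : p ∣ b.2 := (Nat.dvd_add_right ⟨a, ha⟩).1 (hsum ▸ ⟨m, rfl⟩)
      obtain ⟨c, hc⟩ := hb2
      exact Prod.ext (by simp only [ha]; rw [Nat.mul_div_cancel_left _ hp])
        (by simp only [hc]; rw [Nat.mul_div_cancel_left _ hp])
    · intro a ha
      rw [coeff_psSub, coeff_psSub, if_pos (dvd_mul_right p a.1), if_pos (dvd_mul_right p a.2),
        Nat.mul_div_cancel_left _ hp, Nat.mul_div_cancel_left _ hp]
  · rw [if_neg h]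
    symm
    apply Finset.sum_eq_zero
    intro x hx
    rw [HasAntidiagonal.mem_antidiagonal] at hx
    rw [coeff_psSub, coeff_psSub]
    by_cases h1 : p ∣ x.1
    · rw [if_neg (fun h2 => h (hx ▸ Nat.dvd_add h1 h2)), mul_zero]
    · rw [if_neg h1, zero_mul]

lemma psSub_pow {p : ℕ} (hp : 0 < p) (f : PowerSeries R) (k : ℕ) :
    psSub p (f ^ k) = psSub p f ^ k := by
  induction k with
  | zero => simpa using psSub_one hp
  | succ k ih => rw [pow_succ, pow_succ, psSub_mul hp, ih]

end Aux

section ExpAux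

set_option linter.unusedSectionVars false

variable {K : Type*} [Field K] [CharZero K]

lemma coeff_pow_eq_zero {u : PowerSeries K} (hu : PowerSeries.constantCoeff u = 0)
    {k n : ℕ} (hn : n < k) : PowerSeries.coeff n (u ^ k) = 0 := by
  have h1 : (X : PowerSeries K) ^ k ∣ u ^ k :=
    pow_dvd_pow_of_dvd (X_dvd_iff.2 hu) k
  exact X_pow_dvd_iff.1 h1 n hn

lemma coeff_mul_pow_eq_zero {u v : PowerSeries K} (hu : PowerSeries.constantCoeff u = 0)
    (hv : PowerSeries.constantCoeff v = 0) {i j n : ℕ} (hn : n < i + j) :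
    PowerSeries.coeff n (u ^ i * v ^ j) = 0 := by
  have h1 : (X : PowerSeries K) ^ (i + j) ∣ u ^ i * v ^ j := by
    rw [pow_add]
    exact mul_dvd_mul (pow_dvd_pow_of_dvd (X_dvd_iff.2 hu) i)
      (pow_dvd_pow_of_dvd (X_dvd_iff.2 hv) j)
  exact X_pow_dvd_iff.1 h1 n hn

lemma coeff_psExp (u : PowerSeries K) (n : ℕ) :
    PowerSeries.coeff n (psExp u) =
      ∑ k ∈ Finset.range (n + 1), (PowerSeries.coeff n (u ^ k)) / (Nat.factorial k : K) :=
  coeff_mk _ _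

lemma constantCoeff_psExp {u : PowerSeries K} (hu : PowerSeries.constantCoeff u = 0) :
    PowerSeries.constantCoeff (psExp u) = 1 := by
  rw [← coeff_zero_eq_constantCoeff_apply, coeff_psExp]
  simp

lemma psExp_add {u v : PowerSeries K} (hu : PowerSeries.constantCoeff u = 0)
    (hv : PowerSeries.constantCoeff v = 0) :
    psExp (u + v) = psExp u * psExp v := by
  ext n
  rw [PowerSeries.coeff_mul, coeff_psExp]
  set G : ℕ × ℕ → K := fun x =>
    PowerSeries.coeff n (u ^ x.1 * v ^ x.2) / ((Nat.factorial x.1 : K) * (Nat.factorial x.2 : K))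
    with hG
  have hsq : ∑ k ∈ range (n + 1), PowerSeries.coeff n ((u + v) ^ k) / (Nat.factorial k : K)
      = ∑ x ∈ (range (n+1)) ×ˢ (range (n+1)), G x := by
    have step1 : ∀ k, PowerSeries.coeff n ((u + v) ^ k) / (Nat.factorial k : K)
        = ∑ x ∈ antidiagonal k, G x := by
      intro k
      rw [add_pow, map_sum, Finset.sum_div, Finset.Nat.sum_antidiagonal_eq_sum_range_succ_mk]
      refine Finset.sum_congr rfl fun i hi => ?_
      rw [mem_range] at hi
      have hle : i ≤ k := by omega
      rw [← map_natCast (C) (k.choose i), coeff_mul_C, hG]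
      simp only
      have hk : (Nat.factorial k : K) ≠ 0 := Nat.cast_ne_zero.2 k.factorial_ne_zero
      have hij : ((Nat.factorial i : K) * (Nat.factorial (k-i) : K)) ≠ 0 :=
        mul_ne_zero (Nat.cast_ne_zero.2 i.factorial_ne_zero)
          (Nat.cast_ne_zero.2 (k-i).factorial_ne_zero)
      rw [div_eq_div_iff hk hij]
      have hcc : ((k.choose i : K)) * (Nat.factorial i : K) * (Nat.factorial (k-i) : K)
          = (Nat.factorial k : K) := by
        exact_mod_cast congrArg (Nat.cast : ℕ → K) (Nat.choose_mul_factorial_mul_factorial hle)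
      linear_combination (PowerSeries.coeff n (u ^ i * v ^ (k - i))) * hcc
    rw [Finset.sum_congr rfl (fun k _ => step1 k)]
    rw [← Finset.sum_biUnion]
    · apply Finset.sum_subset
      · intro x hx
        simp only [Finset.mem_biUnion, mem_range, HasAntidiagonal.mem_antidiagonal] at hx
        obtain ⟨k, hk, hxk⟩ := hx
        simp only [Finset.mem_product, mem_range]
        omega
      · intro x hx hnx
        simp only [Finset.mem_product, mem_range] at hx
        have hgt : n < x.1 + x.2 := by
          by_contra hle
          exact hnx (Finset.mem_biUnion.2 ⟨x.1 + x.2, by simp; omega, by simp [HasAntidiagonal.mem_antidiagonal]⟩)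
        rw [hG]
        simp only
        rw [coeff_mul_pow_eq_zero hu hv hgt, zero_div]
    · intro a _ b _ hab
      simp only [Finset.disjoint_left, HasAntidiagonal.mem_antidiagonal]
      intro x h1 h2
      exact hab (by omega)
  rw [hsq]
  have stepR : ∀ x : ℕ × ℕ, x ∈ antidiagonal n →
      PowerSeries.coeff x.1 (psExp u) * PowerSeries.coeff x.2 (psExp v)
      = ∑ y ∈ (range (n+1)) ×ˢ (range (n+1)),
          PowerSeries.coeff x.1 (u ^ y.1) * PowerSeries.coeff x.2 (v ^ y.2)
            / ((Nat.factorial y.1 : K) * (Nat.factorial y.2 : K)) := by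
    intro x hx
    rw [HasAntidiagonal.mem_antidiagonal] at hx
    rw [coeff_psExp, coeff_psExp, Finset.sum_mul_sum, ← Finset.sum_product']
    rw [Finset.sum_congr rfl (fun y _ => div_mul_div_comm _ _ _ _)]
    apply Finset.sum_subset
    · intro y hy
      simp only [Finset.mem_product, mem_range] at hy ⊢
      omega
    · intro y hy hny
      simp only [Finset.mem_product, mem_range] at hy hny
      have : x.1 < y.1 ∨ x.2 < y.2 := by omega
      rcases this with h | h
      · rw [coeff_pow_eq_zero hu h, zero_mul, zero_div]
      · rw [coeff_pow_eq_zero hv h, mul_zero, zero_div]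
  rw [Finset.sum_congr rfl stepR, Finset.sum_comm]
  refine Finset.sum_congr rfl fun y _ => ?_
  rw [hG]
  simp only
  rw [PowerSeries.coeff_mul, Finset.sum_div]

lemma psExp_zero : psExp (0 : PowerSeries K) = 1 := by
  ext n
  rw [coeff_psExp]
  rw [Finset.sum_eq_single 0]
  · simp [coeff_one]
  · intro k _ hk
    rw [zero_pow hk, map_zero, zero_div]
  · simp

lemma psExp_nsmul {u : PowerSeries K} (hu : PowerSeries.constantCoeff u = 0) (k : ℕ) :
    psExp (k • u) = psExp u ^ k := by
  induction k with
  | zero => simpa using psExp_zero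
  | succ k ih =>
    rw [succ_nsmul, psExp_add (by simp [hu]) hu, ih, pow_succ]

lemma psSub_psExp {p : ℕ} (hp : 0 < p) {u : PowerSeries K}
    (hu : PowerSeries.constantCoeff u = 0) :
    psSub p (psExp u) = psExp (psSub p u) := by
  ext n
  rw [coeff_psSub]
  by_cases h : p ∣ n
  · rw [if_pos h, coeff_psExp, coeff_psExp]
    have hnp : n / p ≤ n := Nat.div_le_self n p
    have hc : ∀ k ∈ range (n + 1),
        PowerSeries.coeff n (psSub p u ^ k) / (Nat.factorial k : K)
        = PowerSeries.coeff (n / p) (u ^ k) / (Nat.factorial k : K) := fun k _ => by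
      rw [← psSub_pow hp, coeff_psSub, if_pos h]
    rw [Finset.sum_congr rfl hc]
    refine Finset.sum_subset (fun x hx => by simp only [mem_range] at hx ⊢; omega)
      (fun k hk hnk => ?_)
    simp only [mem_range] at hk hnk
    rw [coeff_pow_eq_zero hu (by omega), zero_div]
  · rw [if_neg h, coeff_psExp]
    symm
    apply Finset.sum_eq_zero
    intro k _
    rw [← psSub_pow hp, coeff_psSub, if_neg h, zero_div]

lemma key_identity {p : ℕ} (hp : 0 < p) {u : PowerSeries K}
    (hu : PowerSeries.constantCoeff u = 0) :
    psSub p (psExp u) = psExp (psSub p u - (p : K) • u) * psExp u ^ p := by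
  have h1 : PowerSeries.constantCoeff (psSub p u) = 0 := by
    rw [constantCoeff_psSub, hu]
  have h2 : PowerSeries.constantCoeff (psSub p u - (p : K) • u) = 0 := by
    simp [h1, hu]
  have h3 : psSub p u - (p : K) • u + p • u = psSub p u := by
    rw [Nat.cast_smul_eq_nsmul]; abel
  rw [← psExp_nsmul hu p, ← psExp_add h2 (by simp [hu]), h3, psSub_psExp hp hu]

end ExpAux

section CharPAux

lemma zmod_coeff_pow (p : ℕ) [hp : Fact p.Prime] :
    ∀ n (f : PowerSeries (ZMod p)),
      PowerSeries.coeff n (f ^ p) =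
        if p ∣ n then PowerSeries.coeff (n / p) f else 0 := by
  haveI : CharP (PowerSeries (ZMod p)) p :=
    charP_of_injective_ringHom (PowerSeries.C_injective (R := ZMod p)) p
  intro n
  induction n using Nat.strong_induction_on with
  | _ n ih =>
    intro f
    set a := PowerSeries.constantCoeff f with ha
    set g : PowerSeries (ZMod p) := PowerSeries.mk fun m => PowerSeries.coeff (m+1) f
      with hg
    have hf : f = C a + X * g := by
      ext m
      cases m with
      | zero => simp [hg, ha]
      | succ m => simp [hg, coeff_succ_X_mul, coeff_C]
    have hpow : f ^ p = C a + X ^ p * g ^ p := by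
      rw [hf, add_pow_char, ← map_pow, ZMod.pow_card, mul_pow]
    rw [hpow, map_add, coeff_C]
    rcases Nat.eq_zero_or_pos n with rfl | hn
    · rw [if_pos rfl, if_pos (dvd_zero p), Nat.zero_div,
        PowerSeries.coeff_X_pow_mul' , if_neg (by have := hp.out.pos; omega), add_zero, ha,
        coeff_zero_eq_constantCoeff_apply]
    · rw [if_neg hn.ne', zero_add, PowerSeries.coeff_X_pow_mul']
      by_cases hnp : p ≤ n
      · rw [if_pos hnp, ih (n - p) (by have := hp.out.pos; omega) g]
        have hdvd : p ∣ n - p ↔ p ∣ n := by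
          constructor
          · intro h; have := Nat.dvd_add h (dvd_refl p); simpa [Nat.sub_add_cancel hnp] using this
          · intro h; exact Nat.dvd_sub h (dvd_refl p)
        by_cases h : p ∣ n
        · obtain ⟨m, rfl⟩ := h
          have hm : 1 ≤ m := by
            by_contra hc
            have : m = 0 := by omega
            subst this
            simp at hn
          rw [if_pos (hdvd.2 ⟨m, rfl⟩), if_pos ⟨m, rfl⟩, hg, coeff_mk]
          have e1 : p * m - p = p * (m - 1) := by
            rw [Nat.mul_sub, Nat.mul_one]
          rw [e1, Nat.mul_div_cancel_left _ hp.out.pos, Nat.mul_div_cancel_left _ hp.out.pos,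
            Nat.sub_add_cancel hm]
        · rw [if_neg (fun hc => h (hdvd.1 hc)), if_neg h]
      · rw [if_neg hnp, if_neg (fun h => hnp (Nat.le_of_dvd hn h))]

end CharPAux

section PadicAux

variable {p : ℕ} [hp : Fact p.Prime]

lemma frob_cong (f : PowerSeries ℚ_[p]) (hf : ∀ m, ‖PowerSeries.coeff m f‖ ≤ 1) (n : ℕ) :
    ‖PowerSeries.coeff n (f ^ p)
      - (if p ∣ n then PowerSeries.coeff (n / p) f else 0)‖ ≤ ‖(p : ℚ_[p])‖ := by
  set F : PowerSeries ℤ_[p] := PowerSeries.mk fun m => ⟨PowerSeries.coeff m f, hf m⟩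
    with hF
  have hmap : PowerSeries.map (PadicInt.Coe.ringHom) F = f := by
    ext m
    rw [PowerSeries.coeff_map, hF]
    erw [coeff_mk]
    rfl
  have hc1 : PowerSeries.coeff n (f ^ p)
      = (PadicInt.Coe.ringHom (PowerSeries.coeff n (F ^ p)) : ℚ_[p]) := by
    rw [← hmap, ← map_pow, PowerSeries.coeff_map]
  have hc2 : (if p ∣ n then PowerSeries.coeff (n / p) f else 0)
      = PadicInt.Coe.ringHom (if p ∣ n then PowerSeries.coeff (n / p) F else 0) := by
    rw [apply_ite PadicInt.Coe.ringHom, map_zero, ← hmap, PowerSeries.coeff_map]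
  rw [hc1, hc2, ← map_sub]
  set d : ℤ_[p] := PowerSeries.coeff n (F ^ p)
    - (if p ∣ n then PowerSeries.coeff (n / p) F else 0) with hd
  have hker : PadicInt.toZMod d = 0 := by
    rw [hd, map_sub]
    have h1 : PadicInt.toZMod (PowerSeries.coeff n (F ^ p))
        = PowerSeries.coeff n ((PowerSeries.map PadicInt.toZMod F) ^ p) := by
      rw [← map_pow, PowerSeries.coeff_map]
    rw [h1, zmod_coeff_pow p n, apply_ite PadicInt.toZMod, map_zero, PowerSeries.coeff_map,
      sub_self]
  have hmem : d ∈ Ideal.span {(p : ℤ_[p])} := by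
    rw [← PadicInt.maximalIdeal_eq_span_p, ← PadicInt.ker_toZMod]
    exact hker
  obtain ⟨c, hc⟩ := Ideal.mem_span_singleton'.1 hmem
  have : ‖(PadicInt.Coe.ringHom d : ℚ_[p])‖ = ‖d‖ := rfl
  rw [this, ← hc]
  calc ‖c * (p : ℤ_[p])‖ = ‖c‖ * ‖(p : ℤ_[p])‖ := norm_mul _ _
    _ ≤ 1 * ‖(p : ℤ_[p])‖ := by
        exact mul_le_mul_of_nonneg_right (PadicInt.norm_le_one c) (norm_nonneg _)
    _ = ‖(p : ℚ_[p])‖ := by rw [one_mul, PadicInt.norm_def, PadicInt.coe_natCast]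

lemma norm_coeff_mul_le {f g : PowerSeries ℚ_[p]} {C D : ℝ} (hC : 0 ≤ C) (hD : 0 ≤ D)
    (hf : ∀ m, ‖PowerSeries.coeff m f‖ ≤ C) (hg : ∀ m, ‖PowerSeries.coeff m g‖ ≤ D)
    (n : ℕ) : ‖PowerSeries.coeff n (f * g)‖ ≤ C * D := by
  rw [PowerSeries.coeff_mul]
  refine IsUltrametricDist.norm_sum_le_of_forall_le_of_nonneg (by positivity) fun i _ => ?_
  rw [norm_mul]
  exact mul_le_mul (hf _) (hg _) (norm_nonneg _) hC

lemma norm_coeff_pow_le {f : PowerSeries ℚ_[p]} (hf : ∀ m, ‖PowerSeries.coeff m f‖ ≤ 1)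
    (k : ℕ) : ∀ n, ‖PowerSeries.coeff n (f ^ k)‖ ≤ 1 := by
  induction k with
  | zero =>
    intro n
    rw [pow_zero, PowerSeries.coeff_one]
    split_ifs <;> simp
  | succ k ih =>
    intro n
    rw [pow_succ]
    simpa using norm_coeff_mul_le (zero_le_one) (zero_le_one) ih hf n

lemma norm_coeff_inv_le {f : PowerSeries ℚ_[p]} (h0 : PowerSeries.constantCoeff f = 1)
    (hf : ∀ m, ‖PowerSeries.coeff m f‖ ≤ 1) :
    ∀ n, ‖PowerSeries.coeff n f⁻¹‖ ≤ 1 := by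
  intro n
  induction n using Nat.strong_induction_on with
  | _ n ih =>
    rw [PowerSeries.coeff_inv]
    split_ifs with h
    · rw [h0, inv_one, norm_one]
    · rw [h0, inv_one, neg_one_mul, norm_neg]
      refine IsUltrametricDist.norm_sum_le_of_forall_le_of_nonneg zero_le_one fun x hx => ?_
      split_ifs with h2
      · rw [norm_mul]
        simpa using mul_le_mul (hf x.1) (ih x.2 h2) (norm_nonneg _) zero_le_one
      · simp

end PadicAux

/-- **Dieudonné–Dwork lemma (additive version).** For `u ∈ z·ℚ_p[[z]]`,
`exp(u(z)) ∈ 1 + z·ℤ_p[[z]]` iff `exp(u(z^p) - p·u(z)) ∈ 1 + p·ℤ_p[[z]]`. -/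
theorem dieudonne_dwork (p : ℕ) [hp : Fact p.Prime] (u : PowerSeries ℚ_[p])
    (hu : PowerSeries.constantCoeff u = 0) :
    (∀ n : ℕ, ‖PowerSeries.coeff n (psExp u)‖ ≤ 1) ↔
      (PowerSeries.constantCoeff (psExp (psSubstPow p u - (p : ℚ_[p]) • u)) = 1 ∧
        ∀ n : ℕ, 0 < n → ∃ c : ℚ_[p], ‖c‖ ≤ 1 ∧
          PowerSeries.coeff n (psExp (psSubstPow p u - (p : ℚ_[p]) • u)) = p * c) := by
  have hp1 : 0 < p := hp.out.pos
  have hpne : (p : ℚ_[p]) ≠ 0 := Nat.cast_ne_zero.2 hp1.ne'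
  have hpnorm : (0:ℝ) < ‖(p : ℚ_[p])‖ := norm_pos_iff.2 hpne
  have hsub : psSubstPow p u = psSub p u := rfl
  set f := psExp u with hfdef
  set v := psSubstPow p u - (p : ℚ_[p]) • u with hvdef
  set g := psExp v with hgdef
  have hv0 : PowerSeries.constantCoeff v = 0 := by
    rw [hvdef, map_sub, hsub, constantCoeff_psSub, hu]
    simp [hu]
  have hf0 : PowerSeries.constantCoeff f = 1 := constantCoeff_psExp hu
  have hg0 : PowerSeries.constantCoeff g = 1 := constantCoeff_psExp hv0
  have hkey : psSub p f = g * f ^ p := key_identity hp1 hu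
  constructor
  · intro hf
    refine ⟨hg0, fun n hn => ?_⟩
    have hfp0 : PowerSeries.constantCoeff (f ^ p) = 1 := by rw [map_pow, hf0, one_pow]
    have hfp : ∀ m, ‖PowerSeries.coeff m (f ^ p)‖ ≤ 1 := norm_coeff_pow_le hf p
    have hinv : ∀ m, ‖PowerSeries.coeff m (f ^ p)⁻¹‖ ≤ 1 := norm_coeff_inv_le hfp0 hfp
    have hdiff : ∀ m, ‖PowerSeries.coeff m (psSub p f - f ^ p)‖ ≤ ‖(p : ℚ_[p])‖ := by
      intro m
      rw [map_sub, coeff_psSub, norm_sub_rev]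
      exact frob_cong f hf m
    have hcancel : f ^ p * (f ^ p)⁻¹ = 1 :=
      PowerSeries.mul_inv_cancel _ (by rw [hfp0]; exact one_ne_zero)
    have hgm1 : (psSub p f - f ^ p) * (f ^ p)⁻¹ = g - 1 := by
      calc (psSub p f - f ^ p) * (f ^ p)⁻¹
          = (g - 1) * (f ^ p * (f ^ p)⁻¹) := by
            rw [hkey, sub_mul, sub_mul, one_mul, mul_assoc]
        _ = g - 1 := by rw [hcancel, mul_one]
    have hbound : ‖PowerSeries.coeff n g‖ ≤ ‖(p : ℚ_[p])‖ := by
      have he : PowerSeries.coeff n g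
          = PowerSeries.coeff n ((psSub p f - f ^ p) * (f ^ p)⁻¹) := by
        rw [hgm1, map_sub, PowerSeries.coeff_one, if_neg hn.ne', sub_zero]
      rw [he]
      simpa using norm_coeff_mul_le hpnorm.le zero_le_one hdiff hinv n
    refine ⟨PowerSeries.coeff n g / (p : ℚ_[p]), ?_, ?_⟩
    · rw [norm_div]
      exact (div_le_one hpnorm).2 hbound
    · rw [mul_comm, div_mul_cancel₀ _ hpne]
  · rintro ⟨h0, hsm⟩
    have hgb : ∀ j, 0 < j → ‖PowerSeries.coeff j g‖ ≤ ‖(p : ℚ_[p])‖ := fun j hj => by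
      obtain ⟨c, hc1, hc2⟩ := hsm j hj
      rw [hc2, norm_mul]
      have h5 := mul_le_mul_of_nonneg_left hc1 (norm_nonneg ((p : ℚ_[p])))
      simpa using h5
    intro n
    induction n using Nat.strong_induction_on with
    | _ n ih =>
    rcases Nat.eq_zero_or_pos n with rfl | hn
    · rw [coeff_zero_eq_constantCoeff_apply, hf0, norm_one]
    set F : PowerSeries ℚ_[p] :=
      PowerSeries.mk fun m => if m < n then PowerSeries.coeff m f else 0 with hFdef
    have hFc : ∀ m, PowerSeries.coeff m F
        = if m < n then PowerSeries.coeff m f else 0 := fun m => coeff_mk _ _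
    have hFle : ∀ m, ‖PowerSeries.coeff m F‖ ≤ 1 := by
      intro m
      rw [hFc]
      split_ifs with h
      exacts [ih m h, by simp]
    have hFp : ∀ m, ‖PowerSeries.coeff m (F ^ p)‖ ≤ 1 := norm_coeff_pow_le hFle p
    set r := f - F with hrdef
    have hr : ∀ j, j < n → PowerSeries.coeff j r = 0 := by
      intro j hj
      rw [hrdef, map_sub, hFc, if_pos hj, sub_self]
    have hrn : PowerSeries.coeff n r = PowerSeries.coeff n f := by
      rw [hrdef, map_sub, hFc, if_neg (lt_irrefl n), sub_zero]
    have hXr : (X : PowerSeries ℚ_[p]) ^ n ∣ r := X_pow_dvd_iff.2 hr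
    have hF0 : PowerSeries.constantCoeff F = 1 := by
      rw [← coeff_zero_eq_constantCoeff_apply, hFc, if_pos hn,
        coeff_zero_eq_constantCoeff_apply, hf0]
    have claimA : ∀ m, m ≤ n → PowerSeries.coeff m (f ^ p)
        = PowerSeries.coeff m (F ^ p)
          + (if m = n then (p : ℚ_[p]) * PowerSeries.coeff n f else 0) := by
      intro m hm
      have hfrF : f = r + F := by rw [hrdef]; ring
      have hsplit : range (p + 1) = insert 0 (insert 1 (Ico 2 (p + 1))) := by
        ext x
        simp only [mem_range, Finset.mem_insert, Finset.mem_Ico]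
        omega
      conv_lhs => rw [hfrF]
      rw [add_pow, map_sum, hsplit, Finset.sum_insert (by simp), Finset.sum_insert (by simp)]
      have hzero : ∑ k ∈ Ico 2 (p + 1),
          PowerSeries.coeff m (r ^ k * F ^ (p - k) * ((p.choose k : ℕ) : PowerSeries ℚ_[p]))
          = 0 := by
        apply Finset.sum_eq_zero
        intro k hk
        rw [Finset.mem_Ico] at hk
        have hdvd : (X : PowerSeries ℚ_[p]) ^ (n * k) ∣
            r ^ k * F ^ (p - k) * ((p.choose k : ℕ) : PowerSeries ℚ_[p]) := by
          rw [mul_assoc]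
          exact dvd_mul_of_dvd_left (by rw [pow_mul]; exact pow_dvd_pow_of_dvd hXr k) _
        exact X_pow_dvd_iff.1 hdvd m (by nlinarith [hk.1, hm, hn])
      rw [hzero, add_zero]
      have ht0 : PowerSeries.coeff m
          (r ^ 0 * F ^ (p - 0) * ((p.choose 0 : ℕ) : PowerSeries ℚ_[p]))
          = PowerSeries.coeff m (F ^ p) := by
        rw [pow_zero, one_mul, Nat.choose_zero_right, Nat.cast_one, mul_one, Nat.sub_zero]
      have ht1 : PowerSeries.coeff m
          (r ^ 1 * F ^ (p - 1) * ((p.choose 1 : ℕ) : PowerSeries ℚ_[p]))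
          = (if m = n then (p : ℚ_[p]) * PowerSeries.coeff n f else 0) := by
        rw [pow_one, Nat.choose_one_right, ← map_natCast (C) p, coeff_mul_C]
        by_cases hmn : m = n
        · subst hmn
          rw [if_pos rfl, PowerSeries.coeff_mul, Finset.sum_eq_single (m, 0)]
          · have e : ((m, 0) : ℕ × ℕ).2 = 0 := rfl
            rw [hrn, e, coeff_zero_eq_constantCoeff_apply, map_pow, hF0, one_pow, mul_one,
              mul_comm]
          · intro b hb hbne
            rw [HasAntidiagonal.mem_antidiagonal] at hb
            have hb1 : b.1 < m := by
              rcases Nat.lt_or_ge b.1 m with h | h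
              · exact h
              · exfalso
                apply hbne
                have h1 : b.1 = m := by omega
                have h2 : b.2 = 0 := by omega
                exact Prod.ext h1 h2
            rw [hr b.1 hb1, zero_mul]
          · intro habs
            exact absurd (HasAntidiagonal.mem_antidiagonal.2 (add_zero m)) habs
        · rw [if_neg hmn]
          have hdvd : (X : PowerSeries ℚ_[p]) ^ n ∣ r * F ^ (p - 1) :=
            dvd_mul_of_dvd_left hXr _
          rw [X_pow_dvd_iff.1 hdvd m (by omega), zero_mul]
      rw [ht0, ht1]
    have hmain : PowerSeries.coeff n (psSub p f)
        = (PowerSeries.coeff n (F ^ p) + (p : ℚ_[p]) * PowerSeries.coeff n f)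
          + ∑ x ∈ (antidiagonal n).erase (0, n),
              PowerSeries.coeff x.1 g * PowerSeries.coeff x.2 (F ^ p) := by
      have hmem : ((0, n) : ℕ × ℕ) ∈ antidiagonal n := HasAntidiagonal.mem_antidiagonal.2 (zero_add n)
      rw [hkey, PowerSeries.coeff_mul, ← Finset.add_sum_erase _ _ hmem]
      congr 1
      · rw [coeff_zero_eq_constantCoeff_apply, hg0, one_mul, claimA n le_rfl, if_pos rfl]
      · apply Finset.sum_congr rfl
        intro x hx
        have hx' := Finset.mem_erase.1 hx
        have hmem2 := HasAntidiagonal.mem_antidiagonal.1 hx'.2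
        have hx2 : x.2 < n := by
          rcases Nat.lt_or_ge x.2 n with h | h
          · exact h
          · exfalso
            apply hx'.1
            have h1 : x.1 = 0 := by omega
            have h2 : x.2 = n := by omega
            exact Prod.ext h1 h2
        rw [claimA x.2 hx2.le, if_neg hx2.ne, add_zero]
    have hEq2 : (p : ℚ_[p]) * PowerSeries.coeff n f
        = (PowerSeries.coeff n (psSub p f) - PowerSeries.coeff n (F ^ p))
          - ∑ x ∈ (antidiagonal n).erase (0, n),
              PowerSeries.coeff x.1 g * PowerSeries.coeff x.2 (F ^ p) := by
      linear_combination -hmain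
    have h1 : ‖PowerSeries.coeff n (psSub p f) - PowerSeries.coeff n (F ^ p)‖
        ≤ ‖(p : ℚ_[p])‖ := by
      have hsubc : PowerSeries.coeff n (psSub p f)
          = if p ∣ n then PowerSeries.coeff (n / p) F else 0 := by
        rw [coeff_psSub]
        by_cases h : p ∣ n
        · rw [if_pos h, if_pos h, hFc, if_pos (Nat.div_lt_self hn hp.out.one_lt)]
        · rw [if_neg h, if_neg h]
      rw [hsubc, norm_sub_rev]
      exact frob_cong F hFle n
    have h2 : ‖∑ x ∈ (antidiagonal n).erase (0, n),
        PowerSeries.coeff x.1 g * PowerSeries.coeff x.2 (F ^ p)‖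
        ≤ ‖(p : ℚ_[p])‖ := by
      refine IsUltrametricDist.norm_sum_le_of_forall_le_of_nonneg hpnorm.le fun x hx => ?_
      have hx' := Finset.mem_erase.1 hx
      have hmem2 := HasAntidiagonal.mem_antidiagonal.1 hx'.2
      have hx1 : 0 < x.1 := by
        rcases Nat.eq_zero_or_pos x.1 with h | h
        · exfalso
          apply hx'.1
          exact Prod.ext h (by omega)
        · exact h
      rw [norm_mul]
      calc ‖PowerSeries.coeff x.1 g‖ * ‖PowerSeries.coeff x.2 (F ^ p)‖
          ≤ ‖(p : ℚ_[p])‖ * 1 :=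
            mul_le_mul (hgb x.1 hx1) (hFp x.2) (norm_nonneg _) hpnorm.le
        _ = ‖(p : ℚ_[p])‖ := mul_one _
    have h3 : ‖(p : ℚ_[p]) * PowerSeries.coeff n f‖ ≤ ‖(p : ℚ_[p])‖ := by
      rw [hEq2, sub_eq_add_neg]
      refine (IsUltrametricDist.norm_add_le_max _ _).trans (max_le h1 ?_)
      rw [norm_neg]
      exact h2
    rw [norm_mul] at h3
    exact (mul_le_iff_le_one_right hpnorm).1 h3
end
end

section
/- Let 𝕜 be a field of characteristic different from 2 and let a₁, b₁, a₂, b₂ ∈ 𝕜. Write σ_j = a_j + b_j and τ_j = a_j·b_j for j = 1, 2. Then the two equalities σ₁ − 2τ₁ = σ₂ − 2τ₂ and σ₁² − 5σ₁τ₁ + 5τ₁² + σ₁ − τ₁ = σ₂² − 5σ₂τ₂ + 5τ₂² + σ₂ − τ₂ hold simultaneously if and only if {a₂, b₂} = {a₁, b₁} or {a₂, b₂} = {1−a₁, 1−b₁} as unordered pairs, i.e., (a₂ = a₁ ∧ b₂ = b₁) ∨ (a₂ = b₁ ∧ b₂ = a₁) ∨ (a₂ = 1−a₁ ∧ b₂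 = 1−b₁) ∨ (a₂ = 1−b₁ ∧ b₂ = 1−a₁). -/
open PowerSeries

noncomputable section

/-- The first two coefficients of the Schwarz map, written in the symmetric functions
`σ_j = a_j + b_j`, `τ_j = a_j·b_j`, agree iff `{a₂,b₂} = {a₁,b₁}` or `{1-a₁,1-b₁}`,
over any field of characteristic ≠ 2. -/
theorem coeff_eq_iff_pair_eq {K : Type*} [Field K] (hchar : ringChar K ≠ 2)
    (a₁ b₁ a₂ b₂ : K) :
    ((a₁ + b₁) - 2 * (a₁ * b₁) = (a₂ + b₂) - 2 * (a₂ * b₂) ∧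
      (a₁ + b₁) ^ 2 - 5 * (a₁ + b₁) * (a₁ * b₁) + 5 * (a₁ * b₁) ^ 2 + (a₁ + b₁) - a₁ * b₁ =
        (a₂ + b₂) ^ 2 - 5 * (a₂ + b₂) * (a₂ * b₂) + 5 * (a₂ * b₂) ^ 2 + (a₂ + b₂) - a₂ * b₂) ↔
      ((a₂ = a₁ ∧ b₂ = b₁) ∨ (a₂ = b₁ ∧ b₂ = a₁) ∨
        (a₂ = 1 - a₁ ∧ b₂ = 1 - b₁) ∨ (a₂ = 1 - b₁ ∧ b₂ = 1 - a₁)) := by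
  constructor
  · rintro ⟨h1, h2⟩
    have key : (a₂ * b₂ - a₁ * b₁) * (1 - (a₁ + b₁) - (a₂ * b₂ - a₁ * b₁)) = 0 := by
      linear_combination (-1 : K) * h2 +
        (2 * (a₁ + b₁) - 5 * (a₁ * b₁) - (a₂ * b₂ - a₁ * b₁) +
          ((a₂ + b₂) - (a₁ + b₁) - 2 * (a₂ * b₂ - a₁ * b₁)) + 1) * h1
    rcases mul_eq_zero.1 key with hd | hd
    · have ht : a₂ * b₂ = a₁ * b₁ := by linear_combination hd
      have hs : a₂ + b₂ = a₁ + b₁ := by linear_combination 2 * ht - h1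
      have hq : (a₂ - a₁) * (a₂ - b₁) = 0 := by linear_combination a₂ * hs - ht
      rcases mul_eq_zero.1 hq with ha | ha
      · have ha' : a₂ = a₁ := by linear_combination ha
        exact Or.inl ⟨ha', by linear_combination hs - ha'⟩
      · have ha' : a₂ = b₁ := by linear_combination ha
        exact Or.inr (Or.inl ⟨ha', by linear_combination hs - ha'⟩)
    · have ht : a₂ * b₂ = (1 - a₁) * (1 - b₁) := by linear_combination -hd
      have hs : a₂ + b₂ = (1 - a₁) + (1 - b₁) := by linear_combination 2 * ht - h1
      have hq : (a₂ - (1 - a₁)) * (a₂ - (1 - b₁)) = 0 := by linear_combination a₂ * hs - ht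
      rcases mul_eq_zero.1 hq with ha | ha
      · have ha' : a₂ = 1 - a₁ := by linear_combination ha
        exact Or.inr (Or.inr (Or.inl ⟨ha', by linear_combination hs - ha'⟩))
      · have ha' : a₂ = 1 - b₁ := by linear_combination ha
        exact Or.inr (Or.inr (Or.inr ⟨ha', by linear_combination hs - ha'⟩))
  · rintro (⟨rfl, rfl⟩ | ⟨rfl, rfl⟩ | ⟨rfl, rfl⟩ | ⟨rfl, rfl⟩) <;>
      exact ⟨by ring, by ring⟩
end
end

section
/- Let m₁, m₂ ≥ 2 be integers, let ε ∈ {1, −1}, and let p be an odd integer coprime to m₁m₂. Then the pair of congruences p(m₁+m₂) ≡ ε(m₁+m₂) (mod 2m₁m₂) and p(m₁−m₂) ≡ ε(m₁−m₂) (mod 2m₁m₂) holds if and only if either (p ≡ ε (mod 2m₁) and p ≡ ε (mod 2m₂)) or (p ≡ m₁ + ε (mod 2m₁) and p ≡ m₂ + ε (mod 2m₂)). -/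
open PowerSeries

noncomputable section

/-- Elementary congruence equivalence (Case 1 of the proof of the main theorem). -/
theorem congruence_case_one (m₁ m₂ : ℤ) (hm₁ : 2 ≤ m₁) (hm₂ : 2 ≤ m₂)
    (ε : ℤ) (hε : ε = 1 ∨ ε = -1) (p : ℤ) (hodd : Odd p) (hcop : IsCoprime p (m₁ * m₂)) :
    (p * (m₁ + m₂) ≡ ε * (m₁ + m₂) [ZMOD 2 * m₁ * m₂] ∧
      p * (m₁ - m₂) ≡ ε * (m₁ - m₂) [ZMOD 2 * m₁ * m₂]) ↔
      ((p ≡ ε [ZMOD 2 * m₁] ∧ p ≡ ε [ZMOD 2 * m₂]) ∨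
        (p ≡ m₁ + ε [ZMOD 2 * m₁] ∧ p ≡ m₂ + ε [ZMOD 2 * m₂])) := by
  have hm1 : (2 : ℤ) * m₁ ≠ 0 := by intro h; omega
  have hm2 : (2 : ℤ) * m₂ ≠ 0 := by intro h; omega
  obtain ⟨t, ht⟩ : ∃ t, p = ε + 2 * t := by
    obtain ⟨k, hk⟩ := hodd
    rcases hε with h | h
    · exact ⟨k, by omega⟩
    · exact ⟨k + 1, by omega⟩
  simp only [Int.modEq_iff_dvd]
  subst ht
  constructor
  · rintro ⟨⟨c, hc⟩, ⟨d, hd⟩⟩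
    have hu : 2 * t = m₁ * (d - c) := by
      have h : (2 * m₂) * (2 * t) = (2 * m₂) * (m₁ * (d - c)) := by
        linear_combination hd - hc
      exact mul_left_cancel₀ hm2 h
    have hv : 2 * t = m₂ * (-(c + d)) := by
      have h : (2 * m₁) * (2 * t) = (2 * m₁) * (m₂ * (-(c + d))) := by
        linear_combination -hc - hd
      exact mul_left_cancel₀ hm1 h
    rcases Int.even_or_odd (d - c) with ⟨a, ha⟩ | ⟨a, ha⟩
    · -- d - c = a + a (even) : first alternative
      left
      have hb : -(c + d) = 2 * (a - d) := by omega
      constructor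
      · exact ⟨-a, by linear_combination -hu - m₁ * ha⟩
      · exact ⟨-(a - d), by linear_combination -hv - m₂ * hb⟩
    · -- d - c = 2a+1 (odd) : second alternative
      right
      have hb : -(c + d) = 2 * (a - d) + 1 := by omega
      constructor
      · exact ⟨-a, by linear_combination -hu - m₁ * ha⟩
      · exact ⟨-(a - d), by linear_combination -hv - m₂ * hb⟩
  · rintro (⟨⟨a, ha⟩, ⟨b, hb⟩⟩ | ⟨⟨a, ha⟩, ⟨b, hb⟩⟩)
    · exact ⟨⟨a + b, by linear_combination m₂ * ha + m₁ * hb⟩,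
        ⟨b - a, by linear_combination m₁ * hb - m₂ * ha⟩⟩
    · exact ⟨⟨a + b - 1, by linear_combination m₂ * ha + m₁ * hb⟩,
        ⟨b - a, by linear_combination m₁ * hb - m₂ * ha⟩⟩
end
end

section
/- Let p be a prime number and let x₁, x₂ be integers with 0 < x₁ < x₂ and p not dividing x₂. Then δ_p(x₁/x₂) = r/x₂, where r is the unique integer with 0 ≤ r < x₂ and p·r ≡ x₁ (mod x₂). -/
open PowerSeries

noncomputable section

/-- Alternative description of the Dwork map on fractions in `(0,1)`:
`δ_p(x₁/x₂) = r/x₂` where `0 ≤ r < x₂` and `p·r ≡ x₁ (mod x₂)`. -/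
theorem dwork_eq_of_modEq (p : ℕ) (hp : p.Prime) (x₁ x₂ : ℤ)
    (h0 : 0 < x₁) (h12 : x₁ < x₂) (hpx : ¬ ((p : ℤ) ∣ x₂))
    (r : ℤ) (hr0 : 0 ≤ r) (hrx : r < x₂) (hcong : (p : ℤ) * r ≡ x₁ [ZMOD x₂]) :
    dwork p ((x₁ : ℚ) / (x₂ : ℚ)) = (r : ℚ) / (x₂ : ℚ) := by
  haveI : Fact p.Prime := ⟨hp⟩
  have hx2 : (x₂ : ℤ) ≠ 0 := by omega
  have hx2Q : (x₂ : ℚ) ≠ 0 := Int.cast_ne_zero.mpr hx2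
  set q : ℚ := (x₁ : ℚ) / (x₂ : ℚ) with hq
  -- denominator of q divides x₂
  have hden : (q.den : ℤ) ∣ x₂ := by
    rw [hq, ← Rat.divInt_eq_div]
    exact Rat.den_dvd x₁ x₂
  have hpden : ¬ ((p : ℤ) ∣ (q.den : ℤ)) := fun h => hpx (h.trans hden)
  have hdenQ : (q.den : ℚ) ≠ 0 := Nat.cast_ne_zero.mpr q.den_nz
  -- cross multiplication
  have hcross : q.num * x₂ = x₁ * q.den := by
    have h1 : (q.num : ℚ) / (q.den : ℚ) = (x₁ : ℚ) / (x₂ : ℚ) := by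
      rw [Rat.num_div_den, hq]
    rw [div_eq_div_iff hdenQ hx2Q] at h1
    exact_mod_cast h1
  -- the integer k with p*r - x₁ = x₂ * k
  obtain ⟨k, hk⟩ : x₂ ∣ ((p : ℤ) * r - x₁) := (Int.ModEq.dvd hcong.symm)
  have hppos : (0 : ℤ) < p := by exact_mod_cast hp.pos
  have hk0 : 0 ≤ k := by nlinarith
  have hkp : k < p := by nlinarith
  -- ZMod p facts
  have hx2z : ((x₂ : ℤ) : ZMod p) ≠ 0 := by
    rw [Ne, ZMod.intCast_zmod_eq_zero_iff_dvd]; exact hpx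
  have hdenz : ((q.den : ℤ) : ZMod p) ≠ 0 := by
    rw [Ne, ZMod.intCast_zmod_eq_zero_iff_dvd]; exact hpden
  have e1 : ((x₂ : ℤ) : ZMod p) * ((k : ℤ) : ZMod p) = -((x₁ : ℤ) : ZMod p) := by
    have : (((x₂ * k : ℤ)) : ZMod p) = (((p : ℤ) * r - x₁ : ℤ) : ZMod p) := by
      rw [← hk]
    push_cast at this
    rw [ZMod.natCast_self] at this
    push_cast
    linear_combination this
  have e2 : ((q.num : ℤ) : ZMod p) * ((x₂ : ℤ) : ZMod p)
      = ((x₁ : ℤ) : ZMod p) * ((q.den : ℤ) : ZMod p) := by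
    have : ((q.num * x₂ : ℤ) : ZMod p) = ((x₁ * q.den : ℤ) : ZMod p) := by rw [hcross]
    push_cast at this; push_cast; linear_combination this
  have hzk : ((k : ℤ) : ZMod p) = (-(q.num : ZMod p)) * ((q.den : ZMod p))⁻¹ := by
    have hden' : ((q.den : ℕ) : ZMod p) ≠ 0 := by
      simpa using hdenz
    rw [eq_mul_inv_iff_mul_eq₀ hden']
    have h3 : ((x₂ : ℤ) : ZMod p) * (((k : ℤ) : ZMod p) * ((q.den : ℕ) : ZMod p))
        = ((x₂ : ℤ) : ZMod p) * (-(q.num : ZMod p)) := by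
      have : ((q.num : ℤ) : ZMod p) = ((q.num : ZMod p)) := by push_cast; ring
      calc ((x₂ : ℤ) : ZMod p) * (((k : ℤ) : ZMod p) * ((q.den : ℕ) : ZMod p))
          = (((x₂ : ℤ) : ZMod p) * ((k : ℤ) : ZMod p)) * ((q.den : ℤ) : ZMod p) := by
            push_cast; ring
        _ = -((x₁ : ℤ) : ZMod p) * ((q.den : ℤ) : ZMod p) := by rw [e1]
        _ = -(((q.num : ℤ) : ZMod p) * ((x₂ : ℤ) : ZMod p)) := by rw [e2]; ring
        _ = ((x₂ : ℤ) : ZMod p) * (-(q.num : ZMod p)) := by push_cast; ring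
    exact mul_left_cancel₀ hx2z h3
  -- compute the val
  have hval : ((((-(q.num : ZMod p)) * ((q.den : ZMod p))⁻¹).val : ℤ)) = k := by
    rw [← hzk]
    have hkn : k = (k.toNat : ℤ) := (Int.toNat_of_nonneg hk0).symm
    rw [hkn]
    have hlt : k.toNat < p := by omega
    rw [Int.cast_natCast, ZMod.val_cast_of_lt hlt]
  -- finish
  rw [dwork]
  rw [show ((((-(q.num : ZMod p)) * ((q.den : ZMod p))⁻¹).val : ℚ)) = (k : ℚ) from by
    exact_mod_cast hval]
  have hpQ : (p : ℚ) ≠ 0 := by exact_mod_cast hp.ne_zero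
  rw [hq]
  field_simp
  have hkQ : (p : ℚ) * r - x₁ = x₂ * k := by exact_mod_cast hk
  linear_combination (-1 : ℚ) * hkQ
end
end
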